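/- With P(x) = sum_{n≥0} 2^n p_n(n) x^{2n}/(2n)! and Q(x) = sum_{n≥1} 2^{n-1}(p_n(n) - p_n(n-1)) x^{2n-1}/(2n-1)!, the identity P(x) = 1 + x Q(x) holds as formal power series. -/

import Mathlib

noncomputable def p : ℕ → ℤ → ℤ
  | 0, k => if k = 0 then 1 else 0
  | n + 1, k => ∑ j ∈ Finset.Icc (-(n : ℤ)) (n : ℤ), |j - k| * p n j

lemma p_symm : ∀ n : ℕ, ∀ k : ℤ, p n (-k) = p n k := by
  intro n
  induction n with
  | zero => intro k; simp [p, neg_eq_zero]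
  | succ n ih =>
    intro k
    simp only [p]
    refine Finset.sum_equiv (Equiv.neg ℤ) (fun i => ?_) (fun i hi => ?_)
    · simp [le_neg, neg_le, and_comm]
    · show |i - -k| * p n i = |(-i) - k| * p n (-i)
      rw [ih]
      congr 1
      rw [← abs_neg]
      ring_nf

lemma sum_jp (m : ℕ) : ∑ j ∈ Finset.Icc (-(m : ℤ)) (m : ℤ), j * p m j = 0 := by
  have h : ∑ j ∈ Finset.Icc (-(m : ℤ)) (m : ℤ), j * p m j
      = ∑ j ∈ Finset.Icc (-(m : ℤ)) (m : ℤ), -(j * p m j) := by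
    refine Finset.sum_equiv (Equiv.neg ℤ) (fun i => ?_) (fun i hi => ?_)
    · simp [le_neg, neg_le, and_comm]
    · show i * p m i = -((-i) * p m (-i))
      rw [p_symm]; ring
  have := h
  rw [Finset.sum_neg_distrib] at this
  linarith

lemma key (s : ℕ) :
    p (s+1) ((s:ℤ)+1) = ((s:ℤ)+1) * (p (s+1) ((s:ℤ)+1) - p (s+1) (s:ℤ)) := by
  have h1 : ∀ j ∈ Finset.Icc (-(s : ℤ)) (s : ℤ), |j - ((s:ℤ)+1)| * p s j
      = ((s:ℤ)+1) * p s j - j * p s j := by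
    intro j hj
    simp only [Finset.mem_Icc] at hj
    rw [abs_of_nonpos (by omega)]
    ring
  have h2 : ∀ j ∈ Finset.Icc (-(s : ℤ)) (s : ℤ), |j - (s:ℤ)| * p s j
      = (s:ℤ) * p s j - j * p s j := by
    intro j hj
    simp only [Finset.mem_Icc] at hj
    rw [abs_of_nonpos (by omega)]
    ring
  simp only [p]
  rw [Finset.sum_congr rfl h1, Finset.sum_congr rfl h2]
  have hj := sum_jp s
  simp only [Finset.sum_sub_distrib, ← Finset.mul_sum, hj]
  ring

open PowerSeries

/-- `P(x) = ∑_{n≥0} 2^n p_n(n) x^{2n}/(2n)!`. -/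
noncomputable def Pdiag : PowerSeries ℚ :=
  PowerSeries.mk fun m =>
    if m % 2 = 0 then ((2 ^ (m / 2) * p (m / 2) ((m / 2 : ℕ) : ℤ) : ℤ) : ℚ) / m.factorial
    else 0

/-- `Q(x) = ∑_{n≥1} 2^{n-1}(p_n(n) - p_n(n-1)) x^{2n-1}/(2n-1)!`. -/
noncomputable def Qdiag : PowerSeries ℚ :=
  PowerSeries.mk fun m =>
    if m % 2 = 1 then
      ((2 ^ ((m - 1) / 2) *
          (p ((m + 1) / 2) (((m + 1) / 2 : ℕ) : ℤ)
            - p ((m + 1) / 2) ((((m + 1) / 2 : ℕ) : ℤ) - 1)) : ℤ) : ℚ) / m.factorial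
    else 0

/-- `P(x) = 1 + x Q(x)` as formal power series. -/
theorem Pdiag_eq_one_add : Pdiag = 1 + PowerSeries.X * Qdiag := by
  ext m
  rw [map_add, PowerSeries.coeff_one]
  cases m with
  | zero =>
    simp [Pdiag, Qdiag, p]
  | succ m =>
    rw [PowerSeries.coeff_succ_X_mul]
    simp only [Pdiag, Qdiag, PowerSeries.coeff_mk, Nat.succ_ne_zero, if_false, zero_add]
    rcases Nat.even_or_odd m with ⟨s, hs⟩ | ⟨s, hs⟩
    · have h1 : (m + 1) % 2 = 1 := by omega
      have h2 : m % 2 = 0 := by omega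
      rw [h1, h2]
      norm_num
    · have h1 : (m + 1) % 2 = 0 := by omega
      have h2 : m % 2 = 1 := by omega
      have h3 : (m + 1) / 2 = s + 1 := by omega
      have h4 : (m - 1) / 2 = s := by omega
      rw [h1, h2, if_pos rfl, if_pos rfl, h3, h4]
      have e1 : (((s+1:ℕ)):ℤ) = (s:ℤ)+1 := by push_cast; ring
      have e2 : (s:ℤ)+1-1 = (s:ℤ) := by ring
      rw [e1, e2]
      have hfac : ((m + 1).factorial : ℚ) = ((m:ℚ) + 1) * m.factorial := by
        rw [Nat.factorial_succ]; push_cast; ring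
      have hk' : (p (s+1) ((s:ℤ)+1) : ℚ)
          = ((s:ℚ)+1) * ((p (s+1) ((s:ℤ)+1) : ℚ) - (p (s+1) (s:ℤ) : ℚ)) := by
        exact_mod_cast key s
      have hfacne : (m.factorial : ℚ) ≠ 0 := by positivity
      have hmq : (m : ℚ) = 2 * s + 1 := by exact_mod_cast hs
      rw [hfac]
      push_cast
      rw [hmq]
      field_simp
      linear_combination (2 * 2 ^ s) * hk'
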